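/- Every mutual-visibility set of ST_3^2 has at most 6 vertices, i.e., μ(ST_3^2) ≤ 6. -/

import Mathlib

namespace SierpinskiTriangle

/-- The unit upward triangle ("cell") with lower-left corner `c` is present in the
level-`n` Sierpiński triangle (Pascal-mod-2 characterization). -/
def Cell (n : ℕ) (c : ℕ × ℕ) : Prop :=
  Nat.land c.1 c.2 = 0 ∧ c.1 + c.2 < 2 ^ n

/-- The three corner points of the cell with lower-left corner `c`. -/
def cellCorners (c : ℕ × ℕ) : Set (ℕ × ℕ) :=
  {c, (c.1 + 1, c.2), (c.1, c.2 + 1)}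

/-- The Sierpiński triangle graph `ST₃ⁿ`, realized on the ambient type `ℕ × ℕ`
(points that are not vertices of `ST₃ⁿ` are isolated). Two distinct points are
adjacent iff they are corners of a common present cell. -/
def graph (n : ℕ) : SimpleGraph (ℕ × ℕ) where
  Adj u v := u ≠ v ∧ ∃ c, Cell n c ∧ u ∈ cellCorners c ∧ v ∈ cellCorners c
  symm := ⟨fun u v ⟨huv, c, hc, hu, hv⟩ => ⟨huv.symm, c, hc, hv, hu⟩⟩
  loopless := ⟨fun u h => h.1 rfl⟩

/-- The vertex set of `ST₃ⁿ`. -/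
def verts (n : ℕ) : Set (ℕ × ℕ) := {v | ∃ c, Cell n c ∧ v ∈ cellCorners c}

/-- The three extreme vertices of `ST₃ⁿ`. -/
def extreme (n : ℕ) : Set (ℕ × ℕ) := {(0, 0), (2 ^ n, 0), (0, 2 ^ n)}

/-- `IsCopy n m o` : the translate by `o` of `ST₃ᵐ` is one of the canonical copies
of `ST₃ᵐ` inside `ST₃ⁿ` arising from the recursive construction. -/
def IsCopy (n m : ℕ) (o : ℕ × ℕ) : Prop :=
  ∃ i j : ℕ, o = (i * 2 ^ m, j * 2 ^ m) ∧ Nat.land i j = 0 ∧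
    i * 2 ^ m + j * 2 ^ m + 2 ^ m ≤ 2 ^ n

/-- The vertex set of the copy of `ST₃ᵐ` at offset `o`. -/
def copyVerts (m : ℕ) (o : ℕ × ℕ) : Set (ℕ × ℕ) :=
  (fun v : ℕ × ℕ => (o.1 + v.1, o.2 + v.2)) '' verts m

/-- The extreme vertices of the copy of `ST₃ᵐ` at offset `o`. -/
def copyExtreme (m : ℕ) (o : ℕ × ℕ) : Set (ℕ × ℕ) :=
  {(o.1, o.2), (o.1 + 2 ^ m, o.2), (o.1, o.2 + 2 ^ m)}

/-- A walk is a shortest (geodesic) walk if its length equals the graph distance. -/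
def IsShortest {V : Type*} (G : SimpleGraph V) {u v : V} (w : G.Walk u v) : Prop :=
  w.length = G.dist u v

/-- `u` and `v` are `M`-visible: some shortest `u,v`-path avoids `M \ {u, v}`. -/
def Visible {V : Type*} (G : SimpleGraph V) (M : Set V) (u v : V) : Prop :=
  ∃ w : G.Walk u v, IsShortest G w ∧ ∀ x ∈ w.support, x ∈ M → x = u ∨ x = v

/-- The interval `I(u,v)`: the set of vertices lying on some shortest `u,v`-path. -/
def interval {V : Type*} (G : SimpleGraph V) (u v : V) : Set V :=
  {x | ∃ w : G.Walk u v, IsShortest G w ∧ x ∈ w.support}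

/-- `M` is a mutual-visibility set of `ST₃ⁿ`. -/
def IsMutualVisSet (n : ℕ) (M : Set (ℕ × ℕ)) : Prop :=
  M ⊆ verts n ∧ ∀ u ∈ M, ∀ v ∈ M, Visible (graph n) M u v

/-- `M` is a total mutual-visibility set of `ST₃ⁿ`. -/
def IsTotalMutualVisSet (n : ℕ) (M : Set (ℕ × ℕ)) : Prop :=
  M ⊆ verts n ∧ ∀ u ∈ verts n, ∀ v ∈ verts n, Visible (graph n) M u v

/-- `M` is an outer mutual-visibility set of `ST₃ⁿ`. -/
def IsOuterMutualVisSet (n : ℕ) (M : Set (ℕ × ℕ)) : Prop :=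
  IsMutualVisSet n M ∧ ∀ u ∈ M, ∀ v ∈ verts n \ M, Visible (graph n) M u v

/-- `M` is a dual mutual-visibility set of `ST₃ⁿ`. -/
def IsDualMutualVisSet (n : ℕ) (M : Set (ℕ × ℕ)) : Prop :=
  IsMutualVisSet n M ∧ ∀ u ∈ verts n \ M, ∀ v ∈ verts n \ M, Visible (graph n) M u v

/-- `M` is a general position set of `ST₃ⁿ`. -/
def IsGenPosSet (n : ℕ) (M : Set (ℕ × ℕ)) : Prop :=
  M ⊆ verts n ∧ ∀ u ∈ M, ∀ v ∈ M, ∀ w ∈ M, u ≠ v → u ≠ w → v ≠ w →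
    (graph n).dist u v ≠ (graph n).dist u w + (graph n).dist w v

/-- The proper vertices of the copy of `ST₃²` at offset `o` inside `ST₃ⁿ`: the vertices
of the copy lying on no shortest path between two of its extreme vertices. -/
def properVerts (n : ℕ) (o : ℕ × ℕ) : Set (ℕ × ℕ) :=
  copyVerts 2 o \
    (interval (graph n) (o.1, o.2) (o.1 + 4, o.2) ∪
     interval (graph n) (o.1, o.2) (o.1, o.2 + 4) ∪
     interval (graph n) (o.1 + 4, o.2) (o.1, o.2 + 4))



/-! ### Auxiliary machinery -/

def cellList : List (ℕ × ℕ) := [(0, 0), (0, 1), (0, 2), (0, 3), (1, 0), (1, 2), (2, 0), (2, 1), (3, 0)]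

def vertList : List (ℕ × ℕ) := [(0, 0), (0, 1), (0, 2), (0, 3), (0, 4), (1, 0), (1, 1), (1, 2), (1, 3), (2, 0), (2, 1), (2, 2), (3, 0), (3, 1), (4, 0)]

def cornersL (c : ℕ × ℕ) : List (ℕ × ℕ) := [c, (c.1 + 1, c.2), (c.1, c.2 + 1)]

def adjB (u v : ℕ × ℕ) : Bool :=
  decide (u ≠ v) && cellList.any fun c => decide (u ∈ cornersL c) && decide (v ∈ cornersL c)

def idx : ℕ × ℕ → ℕ
  | (0, 0) => 0
  | (0, 1) => 1
  | (0, 2) => 2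
  | (0, 3) => 3
  | (0, 4) => 4
  | (1, 0) => 5
  | (1, 1) => 6
  | (1, 2) => 7
  | (1, 3) => 8
  | (2, 0) => 9
  | (2, 1) => 10
  | (2, 2) => 11
  | (3, 0) => 12
  | (3, 1) => 13
  | (4, 0) => 14
  | _ => 99

def dtab : List (List ℕ) := [[0, 1, 2, 3, 4, 1, 2, 3, 4, 2, 3, 4, 3, 4, 4],
  [1, 0, 1, 2, 3, 1, 1, 2, 3, 2, 3, 3, 3, 4, 4],
  [2, 1, 0, 1, 2, 2, 1, 1, 2, 2, 3, 2, 3, 3, 4],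
  [3, 2, 1, 0, 1, 3, 2, 1, 1, 3, 3, 2, 4, 3, 4],
  [4, 3, 2, 1, 0, 4, 3, 2, 1, 4, 3, 2, 4, 3, 4],
  [1, 1, 2, 3, 4, 0, 1, 3, 4, 1, 2, 3, 2, 3, 3],
  [2, 1, 1, 2, 3, 1, 0, 2, 3, 1, 2, 3, 2, 3, 3],
  [3, 2, 1, 1, 2, 3, 2, 0, 1, 3, 2, 1, 3, 2, 3],
  [4, 3, 2, 1, 1, 4, 3, 1, 0, 3, 2, 1, 3, 2, 3],
  [2, 2, 2, 3, 4, 1, 1, 3, 3, 0, 1, 2, 1, 2, 2],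
  [3, 3, 3, 3, 3, 2, 2, 2, 2, 1, 0, 1, 1, 1, 2],
  [4, 3, 2, 2, 2, 3, 3, 1, 1, 2, 1, 0, 2, 1, 2],
  [3, 3, 3, 4, 4, 2, 2, 3, 3, 1, 1, 2, 0, 1, 1],
  [4, 4, 3, 3, 3, 3, 3, 2, 2, 2, 1, 1, 1, 0, 1],
  [4, 4, 4, 4, 4, 3, 3, 3, 3, 2, 2, 2, 1, 1, 0]]

def D (u v : ℕ × ℕ) : ℕ := (dtab.getD (idx u) []).getD (idx v) 100

def ptab : List (List (List (ℕ × ℕ))) := [[[], [], [(0, 1)], [(0, 1), (0, 2)], [(0, 1), (0, 2), (0, 3)], [], [(0, 1)], [(0, 1), (0, 2)], [(0, 1), (0, 2), (0, 3)], [(1, 0)], [(1, 0), (2, 0)], [(0, 1), (0, 2), (1, 2)], [(1, 0), (2, 0)], [(1, 0), (2, 0), (2, 1)], [(1, 0), (2, 0), (3, 0)]],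
  [[], [], [], [(0, 2)], [(0, 2), (0, 3)], [], [], [(0, 2)], [(0, 2), (0, 3)], [(1, 0)], [(1, 0), (2, 0)], [(0, 2), (1, 2)], [(1, 0), (2, 0)], [(0, 2), (1, 2), (2, 2)], [(1, 0), (2, 0), (3, 0)]],
  [[(0, 1)], [], [], [], [(0, 3)], [(0, 1)], [], [], [(0, 3)], [(1, 1)], [(1, 1), (2, 0)], [(1, 2)], [(1, 1), (2, 0)], [(1, 2), (2, 2)], [(1, 1), (2, 0), (3, 0)]],
  [[(0, 2), (0, 1)], [(0, 2)], [], [], [], [(0, 2), (0, 1)], [(0, 2)], [], [], [(0, 2), (1, 1)], [(1, 2), (2, 2)], [(1, 2)], [(0, 2), (1, 1), (2, 0)], [(1, 2), (2, 2)], [(1, 2), (2, 2), (3, 1)]],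
  [[(0, 3), (0, 2), (0, 1)], [(0, 3), (0, 2)], [(0, 3)], [], [], [(0, 3), (0, 2), (0, 1)], [(0, 3), (0, 2)], [(0, 3)], [], [(0, 3), (0, 2), (1, 1)], [(1, 3), (2, 2)], [(1, 3)], [(1, 3), (2, 2), (2, 1)], [(1, 3), (2, 2)], [(1, 3), (2, 2), (3, 1)]],
  [[], [], [(0, 1)], [(0, 1), (0, 2)], [(0, 1), (0, 2), (0, 3)], [], [], [(0, 1), (0, 2)], [(0, 1), (0, 2), (0, 3)], [], [(2, 0)], [(2, 0), (2, 1)], [(2, 0)], [(2, 0), (2, 1)], [(2, 0), (3, 0)]],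
  [[(0, 1)], [], [], [(0, 2)], [(0, 2), (0, 3)], [], [], [(0, 2)], [(0, 2), (0, 3)], [], [(2, 0)], [(0, 2), (1, 2)], [(2, 0)], [(2, 0), (2, 1)], [(2, 0), (3, 0)]],
  [[(0, 2), (0, 1)], [(0, 2)], [], [], [(0, 3)], [(0, 2), (0, 1)], [(0, 2)], [], [], [(0, 2), (1, 1)], [(2, 2)], [], [(2, 2), (2, 1)], [(2, 2)], [(2, 2), (3, 1)]],
  [[(0, 3), (0, 2), (0, 1)], [(0, 3), (0, 2)], [(0, 3)], [], [], [(0, 3), (0, 2), (0, 1)], [(0, 3), (0, 2)], [], [], [(2, 2), (2, 1)], [(2, 2)], [], [(2, 2), (2, 1)], [(2, 2)], [(2, 2), (3, 1)]],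
  [[(1, 0)], [(1, 0)], [(1, 1)], [(1, 1), (0, 2)], [(1, 1), (0, 2), (0, 3)], [], [], [(1, 1), (0, 2)], [(2, 1), (2, 2)], [], [], [(2, 1)], [], [(2, 1)], [(3, 0)]],
  [[(2, 0), (1, 0)], [(2, 0), (1, 0)], [(2, 0), (1, 1)], [(2, 2), (1, 2)], [(2, 2), (1, 3)], [(2, 0)], [(2, 0)], [(2, 2)], [(2, 2)], [], [], [], [], [], [(3, 0)]],
  [[(1, 2), (0, 2), (0, 1)], [(1, 2), (0, 2)], [(1, 2)], [(1, 2)], [(1, 3)], [(2, 1), (2, 0)], [(1, 2), (0, 2)], [], [], [(2, 1)], [], [], [(2, 1)], [], [(3, 1)]],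
  [[(2, 0), (1, 0)], [(2, 0), (1, 0)], [(2, 0), (1, 1)], [(2, 0), (1, 1), (0, 2)], [(2, 1), (2, 2), (1, 3)], [(2, 0)], [(2, 0)], [(2, 1), (2, 2)], [(2, 1), (2, 2)], [], [], [(2, 1)], [], [], []],
  [[(2, 1), (2, 0), (1, 0)], [(2, 1), (2, 0), (1, 0)], [(2, 2), (1, 2)], [(2, 2), (1, 2)], [(2, 2), (1, 3)], [(2, 1), (2, 0)], [(2, 1), (2, 0)], [(2, 2)], [(2, 2)], [(2, 1)], [], [], [], [], []],
  [[(3, 0), (2, 0), (1, 0)], [(3, 0), (2, 0), (1, 0)], [(3, 0), (2, 0), (1, 1)], [(3, 1), (2, 2), (1, 2)], [(3, 1), (2, 2), (1, 3)], [(3, 0), (2, 0)], [(3, 0), (2, 0)], [(3, 1), (2, 2)], [(3, 1), (2, 2)], [(3, 0)], [(3, 0)], [(3, 1)], [], [], []]]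

def pathT (u v : ℕ × ℕ) : List (ℕ × ℕ) := ((ptab.getD (idx u) []).getD (idx v) [])

def certs : List (((ℕ × ℕ) × (ℕ × ℕ) × ℕ) × List (ℕ × ℕ)) := [(((0, 0), (0, 2), 1), [(0, 0), (0, 1), (0, 2)]),
  (((0, 3), (2, 0), 2), [(0, 3), (1, 1), (2, 0)]),
  (((0, 4), (2, 1), 1), [(0, 4), (1, 3), (2, 1)]),
  (((1, 0), (4, 0), 2), [(1, 0), (3, 0), (4, 0)]),
  (((1, 2), (3, 1), 1), [(1, 2), (2, 2), (3, 1)]),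
  (((0, 0), (0, 4), 3), [(0, 0), (0, 3), (0, 4)]),
  (((0, 1), (2, 1), 2), [(0, 1), (2, 0), (2, 1)]),
  (((1, 1), (1, 3), 1), [(0, 2), (1, 1), (1, 3)]),
  (((0, 0), (3, 1), 1), [(0, 0), (1, 0), (3, 1)]),
  (((0, 3), (4, 0), 2), [(0, 3), (2, 2), (4, 0)]),
  (((0, 2), (3, 0), 2), [(0, 2), (2, 0), (3, 0)]),
  (((0, 4), (4, 0), 3), [(0, 4), (3, 1), (4, 0)]),
  (((1, 0), (1, 2), 2), [(0, 2), (1, 0), (1, 2)]),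
  (((1, 3), (3, 0), 1), [(1, 3), (2, 2), (3, 0)]),
  (((1, 0), (2, 2), 2), [(1, 0), (2, 1), (2, 2)]),
  (((0, 0), (1, 2), 1), [(0, 0), (0, 1), (1, 2)]),
  (((0, 1), (0, 4), 2), [(0, 1), (0, 3), (0, 4)]),
  (((0, 0), (4, 0), 2), [(0, 0), (2, 0), (4, 0)]),
  (((1, 1), (4, 0), 2), [(1, 1), (3, 0), (4, 0)]),
  (((1, 3), (4, 0), 2), [(1, 3), (3, 1), (4, 0)]),
  (((0, 4), (1, 1), 2), [(0, 2), (0, 4), (1, 1)]),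
  (((1, 3), (2, 0), 1), [(1, 3), (2, 0), (2, 2)]),
  (((1, 0), (3, 0), 1), [(1, 0), (2, 0), (3, 0)]),
  (((0, 1), (0, 3), 1), [(0, 1), (0, 2), (0, 3)]),
  (((0, 4), (3, 0), 2), [(0, 4), (2, 2), (3, 0)]),
  (((0, 0), (1, 2), 2), [(0, 0), (0, 2), (1, 2)]),
  (((1, 1), (3, 1), 1), [(1, 1), (2, 0), (3, 1)]),
  (((0, 3), (2, 1), 1), [(0, 3), (1, 2), (1, 3), (2, 1)]),
  (((0, 0), (1, 3), 1), [(0, 0), (0, 1), (1, 3)]),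
  (((1, 0), (1, 2), 1), [(0, 1), (1, 0), (1, 1), (1, 2)]),
  (((1, 1), (3, 1), 2), [(1, 1), (2, 1), (3, 0), (3, 1)]),
  (((0, 4), (3, 1), 1), [(0, 4), (1, 3), (3, 1)]),
  (((0, 4), (4, 0), 1), [(0, 4), (1, 3), (4, 0)]),
  (((0, 3), (4, 0), 3), [(0, 3), (3, 1), (4, 0)]),
  (((0, 0), (2, 1), 1), [(0, 0), (1, 0), (2, 1)]),
  (((1, 2), (2, 1), 1), [(1, 2), (2, 1), (2, 2)]),
  (((0, 2), (3, 1), 2), [(0, 2), (2, 2), (3, 1)]),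
  (((0, 4), (1, 0), 1), [(0, 3), (0, 4), (1, 0)]),
  (((1, 2), (3, 0), 2), [(1, 2), (2, 1), (3, 0), (3, 1)]),
  (((0, 1), (4, 0), 2), [(0, 1), (2, 0), (4, 0)]),
  (((0, 3), (3, 1), 2), [(0, 3), (2, 2), (3, 1)]),
  (((0, 3), (3, 1), 1), [(0, 3), (1, 2), (1, 3), (3, 1)]),
  (((1, 3), (2, 0), 2), [(1, 3), (2, 0), (2, 1)]),
  (((0, 0), (3, 0), 1), [(0, 0), (1, 0), (3, 0)]),
  (((0, 0), (0, 4), 1), [(0, 0), (0, 1), (0, 4)]),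
  (((0, 1), (2, 1), 1), [(0, 1), (1, 0), (1, 1), (2, 1)]),
  (((1, 0), (3, 1), 2), [(1, 0), (2, 1), (3, 0), (3, 1)]),
  (((0, 0), (0, 3), 2), [(0, 0), (0, 2), (0, 3)]),
  (((0, 0), (4, 0), 1), [(0, 0), (1, 0), (4, 0)]),
  (((0, 1), (1, 2), 1), [(0, 1), (0, 2), (1, 2)]),
  (((0, 2), (0, 4), 1), [(0, 2), (0, 3), (0, 4)]),
  (((1, 1), (3, 0), 1), [(1, 1), (2, 0), (3, 0)]),
  (((0, 0), (2, 0), 1), [(0, 0), (1, 0), (2, 0)]),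
  (((1, 0), (4, 0), 1), [(1, 0), (2, 0), (4, 0)]),
  (((2, 2), (4, 0), 1), [(2, 2), (3, 1), (4, 0)]),
  (((0, 0), (0, 3), 1), [(0, 0), (0, 1), (0, 3)]),
  (((0, 0), (1, 3), 3), [(0, 0), (0, 3), (1, 2), (1, 3)]),
  (((0, 1), (3, 0), 1), [(0, 1), (1, 0), (1, 1), (3, 0)]),
  (((0, 4), (2, 2), 1), [(0, 4), (1, 3), (2, 2)]),
  (((2, 0), (4, 0), 1), [(2, 0), (3, 0), (4, 0)])]

instance (n : ℕ) (c : ℕ × ℕ) : Decidable (Cell n c) :=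
  inferInstanceAs (Decidable (Nat.land c.1 c.2 = 0 ∧ c.1 + c.2 < 2 ^ n))

def chainB : (ℕ × ℕ) → List (ℕ × ℕ) → Bool
  | _, [] => true
  | a, b :: l => adjB a b && chainB b l

lemma mem_corners_iff {u c : ℕ × ℕ} : u ∈ cellCorners c ↔ u ∈ cornersL c := by
  simp [cellCorners, cornersL]

lemma cell_of_mem : ∀ c ∈ cellList, Cell 2 c := by decide

lemma mem_cellList {c : ℕ × ℕ} (h : Cell 2 c) : c ∈ cellList := by
  obtain ⟨a, b⟩ := c
  obtain ⟨h1, h2⟩ := h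
  simp only at h1 h2
  norm_num at h2
  have ha : a ≤ 3 := by omega
  have hb : b ≤ 3 := by omega
  interval_cases a <;> interval_cases b <;> revert h1 <;> decide

lemma adj_iff {u v : ℕ × ℕ} : (graph 2).Adj u v ↔ adjB u v = true := by
  constructor
  · rintro ⟨hne, c, hc, hu, hv⟩
    have hc' := mem_cellList hc
    simp only [adjB, Bool.and_eq_true, List.any_eq_true, decide_eq_true_eq]
    exact ⟨hne, c, hc', mem_corners_iff.mp hu, mem_corners_iff.mp hv⟩
  · intro h
    simp only [adjB, Bool.and_eq_true, List.any_eq_true, decide_eq_true_eq] at h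
    obtain ⟨hne, c, hc, hu, hv⟩ := h
    exact ⟨hne, c, cell_of_mem c hc, mem_corners_iff.mpr hu, mem_corners_iff.mpr hv⟩

lemma corners_sub_verts : ∀ c ∈ cellList, ∀ x ∈ cornersL c, x ∈ vertList := by decide

lemma mem_vertList_of_verts {v : ℕ × ℕ} (h : v ∈ verts 2) : v ∈ vertList := by
  obtain ⟨c, hc, hm⟩ := h
  exact corners_sub_verts c (mem_cellList hc) v (mem_corners_iff.mp hm)

lemma mem_vertList_of_adj {x y : ℕ × ℕ} (h : (graph 2).Adj x y) : x ∈ vertList := by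
  obtain ⟨_, c, hc, hx, _⟩ := h
  exact mem_vertList_of_verts ⟨c, hc, hx⟩

lemma exists_walk_of_chain :
    ∀ (l : List (ℕ × ℕ)) (u v : ℕ × ℕ),
      chainB u (l ++ [v]) = true →
      ∃ w : (graph 2).Walk u v, w.length = l.length + 1 := by
  intro l
  induction l with
  | nil =>
    intro u v h
    rw [List.nil_append] at h
    simp only [chainB, Bool.and_eq_true] at h
    exact ⟨SimpleGraph.Walk.cons (adj_iff.mpr h.1) SimpleGraph.Walk.nil, rfl⟩
  | cons a l ih =>
    intro u v h
    rw [List.cons_append] at h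
    simp only [chainB, Bool.and_eq_true] at h
    obtain ⟨w, hw⟩ := ih a v h.2
    exact ⟨SimpleGraph.Walk.cons (adj_iff.mpr h.1) w, by simp [hw]⟩

lemma paths_ok : ∀ u ∈ vertList, ∀ v ∈ vertList, u ≠ v →
    chainB u (pathT u v ++ [v]) = true ∧
    (pathT u v).length + 1 = D u v := by decide

lemma D_self : ∀ u ∈ vertList, D u u = 0 := by decide

lemma lipB : ∀ u ∈ vertList, ∀ x ∈ vertList, ∀ y ∈ vertList,
    adjB x y = true → D u y ≤ D u x + 1 := by decide

lemma lip (u : ℕ × ℕ) (hu : u ∈ vertList) :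
    ∀ x y, (graph 2).Adj x y → D u y ≤ D u x + 1 := by
  intro x y h
  exact lipB u hu x (mem_vertList_of_adj h) y (mem_vertList_of_adj h.symm) (adj_iff.mp h)

lemma walk_bound {f : ℕ × ℕ → ℕ} (hf : ∀ x y, (graph 2).Adj x y → f y ≤ f x + 1)
    {a b : ℕ × ℕ} (w : (graph 2).Walk a b) : f b ≤ f a + w.length := by
  induction w with
  | nil => simp
  | cons h p ih =>
    have := hf _ _ h
    simp only [SimpleGraph.Walk.length_cons]
    omega

lemma reach_and_le : ∀ u ∈ vertList, ∀ v ∈ vertList,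
    (graph 2).Reachable u v ∧ (graph 2).dist u v ≤ D u v := by
  intro u hu v hv
  by_cases huv : u = v
  · subst huv
    exact ⟨SimpleGraph.Reachable.refl u, by simp [SimpleGraph.dist_self]⟩
  · obtain ⟨hch, hlen⟩ := paths_ok u hu v hv huv
    obtain ⟨w, hw⟩ := exists_walk_of_chain _ u v hch
    exact ⟨⟨w⟩, by rw [← hlen, ← hw]; exact SimpleGraph.dist_le w⟩

lemma dist_eq : ∀ u ∈ vertList, ∀ v ∈ vertList, (graph 2).dist u v = D u v := by
  intro u hu v hv
  obtain ⟨hr, hle⟩ := reach_and_le u hu v hv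
  refine le_antisymm hle ?_
  obtain ⟨w, hw⟩ := hr.exists_walk_length_eq_dist
  have := walk_bound (lip u hu) w
  rw [hw, D_self u hu] at this
  omega

lemma getVert_mem_support {V : Type*} {G : SimpleGraph V} :
    ∀ {u v : V} (w : G.Walk u v) (k : ℕ), w.getVert k ∈ w.support := by
  intro u v w
  induction w with
  | nil => intro k; simp [SimpleGraph.Walk.getVert]
  | cons h p ih =>
    intro k
    cases k with
    | zero => simp [SimpleGraph.Walk.getVert]
    | succ k =>
      rw [SimpleGraph.Walk.getVert_cons_succ, SimpleGraph.Walk.support_cons]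
      exact List.mem_cons_of_mem _ (ih k)

lemma exists_walk_take {V : Type*} {G : SimpleGraph V} :
    ∀ {u v : V} (w : G.Walk u v) (k : ℕ),
      ∃ w' : G.Walk u (w.getVert k), w'.length ≤ k := by
  intro u v w
  induction w with
  | nil => intro k; exact ⟨SimpleGraph.Walk.nil.copy rfl (by simp [SimpleGraph.Walk.getVert]), by simp⟩
  | cons h p ih =>
    intro k
    cases k with
    | zero => exact ⟨SimpleGraph.Walk.nil.copy rfl (by simp [SimpleGraph.Walk.getVert]), le_of_eq (SimpleGraph.Walk.length_copy _ _ _)⟩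
    | succ k =>
      obtain ⟨w', hw'⟩ := ih k
      refine ⟨(SimpleGraph.Walk.cons h w').copy rfl (by rw [SimpleGraph.Walk.getVert_cons_succ]), ?_⟩
      simpa using Nat.succ_le_succ hw'

lemma exists_walk_drop {V : Type*} {G : SimpleGraph V} :
    ∀ {u v : V} (w : G.Walk u v) (k : ℕ),
      ∃ w' : G.Walk (w.getVert k) v, w'.length ≤ w.length - k := by
  intro u v w
  induction w with
  | nil => intro k; exact ⟨SimpleGraph.Walk.nil.copy (by simp [SimpleGraph.Walk.getVert]) rfl, by simp⟩
  | cons h p ih =>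
    intro k
    cases k with
    | zero =>
      exact ⟨(SimpleGraph.Walk.cons h p).copy (by simp [SimpleGraph.Walk.getVert]) rfl, le_of_eq (SimpleGraph.Walk.length_copy _ _ _)⟩
    | succ k =>
      obtain ⟨w', hw'⟩ := ih k
      refine ⟨w'.copy (by rw [SimpleGraph.Walk.getVert_cons_succ]) rfl, ?_⟩
      rw [SimpleGraph.Walk.length_copy, SimpleGraph.Walk.length_cons]
      omega

lemma dist_triangle' {V : Type*} {G : SimpleGraph V} {u x v : V}
    (h1 : G.Reachable u x) (h2 : G.Reachable x v) :
    G.dist u v ≤ G.dist u x + G.dist x v := by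
  obtain ⟨w1, e1⟩ := h1.exists_walk_length_eq_dist
  obtain ⟨w2, e2⟩ := h2.exists_walk_length_eq_dist
  calc G.dist u v ≤ (w1.append w2).length := SimpleGraph.dist_le _
    _ = _ := by rw [SimpleGraph.Walk.length_append, e1, e2]

lemma not_visible (M : Set (ℕ × ℕ)) (u v : ℕ × ℕ) (k : ℕ) (hk : 0 < k)
    (hkd : k < (graph 2).dist u v)
    (hlayer : ∀ x, (graph 2).dist u x = k →
      (graph 2).dist x v = (graph 2).dist u v - k → x ∈ M) :
    ¬ Visible (graph 2) M u v := by
  rintro ⟨w, hsh, hav⟩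
  have hlen : w.length = (graph 2).dist u v := hsh
  obtain ⟨w1, hw1⟩ := exists_walk_take w k
  obtain ⟨w2, hw2⟩ := exists_walk_drop w k
  have h1 : (graph 2).dist u (w.getVert k) ≤ k := le_trans (SimpleGraph.dist_le w1) hw1
  have h2 : (graph 2).dist (w.getVert k) v ≤ (graph 2).dist u v - k :=
    le_trans (SimpleGraph.dist_le w2) (by omega)
  have h3 : (graph 2).dist u v ≤
      (graph 2).dist u (w.getVert k) + (graph 2).dist (w.getVert k) v :=
    dist_triangle' ⟨w1⟩ ⟨w2⟩
  have he1 : (graph 2).dist u (w.getVert k) = k := by omega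
  have he2 : (graph 2).dist (w.getVert k) v = (graph 2).dist u v - k := by omega
  have hxM := hlayer _ he1 he2
  rcases hav _ (getVert_mem_support w k) hxM with h | h
  · rw [h, SimpleGraph.dist_self] at he1; omega
  · rw [h, SimpleGraph.dist_self] at he2; omega

lemma certs_ok : ∀ c ∈ certs, c.1.1 ∈ vertList ∧ c.1.2.1 ∈ vertList ∧
    0 < c.1.2.2 ∧ c.1.2.2 < D c.1.1 c.1.2.1 ∧ c.1.1 ∈ c.2 ∧ c.1.2.1 ∈ c.2 ∧
    (∀ x ∈ vertList, D c.1.1 x = c.1.2.2 →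
      D x c.1.2.1 = D c.1.1 c.1.2.1 - c.1.2.2 → x ∈ c.2) := by decide

def chk : List (ℕ × ℕ) → List (ℕ × ℕ) → ℕ → Bool
  | acc, _, 0 => certs.any fun c => c.2.all fun x => decide (x ∈ acc)
  | _, [], _ + 1 => true
  | acc, r :: rest, k + 1 => chk (r :: acc) rest k && chk acc rest (k + 1)

lemma chk_sound : ∀ (rest acc : List (ℕ × ℕ)) (k : ℕ) (S : Finset (ℕ × ℕ)),
    chk acc rest k = true → S.card = k → (∀ x ∈ S, x ∈ rest) →
    ∃ c ∈ certs, ∀ x ∈ c.2, x ∈ S ∨ x ∈ acc := by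
  intro rest
  induction rest with
  | nil =>
    intro acc k S h hcard hsub
    cases k with
    | zero =>
      simp only [chk, List.any_eq_true, List.all_eq_true, decide_eq_true_eq] at h
      obtain ⟨c, hc, hall⟩ := h
      exact ⟨c, hc, fun x hx => Or.inr (hall x hx)⟩
    | succ k =>
      obtain ⟨x, hx⟩ := Finset.card_pos.mp (by omega : 0 < S.card)
      exact absurd (hsub x hx) List.not_mem_nil
  | cons r rest ih =>
    intro acc k S h hcard hsub
    cases k with
    | zero =>
      simp only [chk, List.any_eq_true, List.all_eq_true, decide_eq_true_eq] at h
      obtain ⟨c, hc, hall⟩ := h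
      exact ⟨c, hc, fun x hx => Or.inr (hall x hx)⟩
    | succ k =>
      simp only [chk, Bool.and_eq_true] at h
      by_cases hr : r ∈ S
      · obtain ⟨c, hc, hall⟩ := ih (r :: acc) k (S.erase r) h.1
          (by rw [Finset.card_erase_of_mem hr]; omega)
          (fun x hx => by
            rcases List.mem_cons.mp (hsub x (Finset.mem_of_mem_erase hx)) with h2 | h2
            · exact absurd h2 (Finset.ne_of_mem_erase hx)
            · exact h2)
        refine ⟨c, hc, fun x hx => ?_⟩
        rcases hall x hx with h1 | h1
        · exact Or.inl (Finset.mem_of_mem_erase h1)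
        · rcases List.mem_cons.mp h1 with h2 | h2
          · exact Or.inl (h2 ▸ hr)
          · exact Or.inr h2
      · obtain ⟨c, hc, hall⟩ := ih acc (k + 1) S h.2 hcard (fun x hx => by
          rcases List.mem_cons.mp (hsub x hx) with h2 | h2
          · exact absurd (h2 ▸ hx) hr
          · exact h2)
        exact ⟨c, hc, hall⟩

set_option maxHeartbeats 12000000 in
lemma chk_true : chk [] vertList 7 = true := by decide

lemma dist_pos_mem {u x : ℕ × ℕ} (h : (graph 2).dist u x ≠ 0) : x ∈ vertList := by
  have hr : (graph 2).Reachable u x := by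
    by_contra hc
    exact h (SimpleGraph.dist_eq_zero_of_not_reachable hc)
  have hne : u ≠ x := by rintro rfl; exact h (SimpleGraph.dist_self)
  obtain ⟨w⟩ := hr
  have hnil : ¬ w.reverse.Nil := by
    rw [SimpleGraph.Walk.nil_iff_length_eq]
    simp only [SimpleGraph.Walk.length_reverse]
    intro hl
    exact hne (w.eq_of_length_eq_zero hl)
  exact mem_vertList_of_adj (SimpleGraph.Walk.adj_snd hnil)

/-- Every mutual-visibility set of `ST₃²` has at most 6 vertices, i.e. `μ(ST₃²) ≤ 6`. -/
theorem mu_two_le_six (M : Set (ℕ × ℕ)) (hM : IsMutualVisSet 2 M) : M.ncard ≤ 6 := by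
  by_contra hcard
  push_neg at hcard
  obtain ⟨T, hTM, hT7⟩ := Set.exists_subset_card_eq (show 7 ≤ M.ncard by omega)
  have hTv : T ⊆ {x | x ∈ vertList} := fun x hx => mem_vertList_of_verts (hM.1 (hTM hx))
  have hTfin : T.Finite := Set.Finite.subset (vertList.finite_toSet) hTv
  set S : Finset (ℕ × ℕ) := hTfin.toFinset with hS
  have hmemS : ∀ x, x ∈ S ↔ x ∈ T := fun x => hTfin.mem_toFinset
  have hScard : S.card = 7 := by
    rw [← hT7]
    exact (Set.ncard_eq_toFinset_card T hTfin).symm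
  obtain ⟨c, hc, hcsub'⟩ := chk_sound vertList [] 7 S chk_true hScard
    (fun x hx => hTv ((hmemS x).mp hx))
  have hcsub : ∀ x ∈ c.2, x ∈ S := fun x hx =>
    (hcsub' x hx).resolve_right List.not_mem_nil
  obtain ⟨hu, hv, hk, hkd, huL, hvL, hlayerD⟩ := certs_ok c hc
  set u := c.1.1; set v := c.1.2.1; set k := c.1.2.2
  have hmemM : ∀ x ∈ c.2, x ∈ M := fun x hx => hTM ((hmemS x).mp (hcsub x hx))
  have hduv : (graph 2).dist u v = D u v := dist_eq u hu v hv
  refine not_visible M u v k hk (by rw [hduv]; exact hkd) ?_ (hM.2 u (hmemM u huL) v (hmemM v hvL))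
  intro x h1 h2
  have hx : x ∈ vertList := dist_pos_mem (by rw [h1]; omega)
  apply hmemM
  apply hlayerD x hx
  · rw [← dist_eq u hu x hx]; exact h1
  · rw [← dist_eq x hx v hv, ← hduv]; exact h2
end SierpinskiTriangle
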